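/- Let ℓ: ℝ × ℝ → ℝ be a loss function such that ℓ(y,·) is convex for every y, and fix s ∈ {0,1}^p. Then strong duality holds for the inner regularized problem restricted to the support encoded by s: inf over w ∈ ℝ^p with w_j = 0 whenever s_j = 0 of Σ_{i=1}^n ℓ(y_i, x_iᵀw) + (1/(2γ))‖w‖₂² equals sup_{α ∈ ℝ^n} f(α,s) = sup_{α ∈ ℝ^n} [−Σ_{i=1}^n ℓ̂(y_i, α_i) − (γ/2) Σ_{j=1}^p s_j (X_jᵀα)²] (equality of values in the extended reals). -/

import Mathlib

open scoped BigOperators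

/-- A finite-everywhere convex function on `Fin k → ℝ` has a subgradient at `0`. -/
lemma exists_subgradient_at_zero {k : ℕ} (f : (Fin k → ℝ) → ℝ)
    (hf : ConvexOn ℝ Set.univ f) :
    ∃ g : Fin k → ℝ, ∀ u, f 0 + ∑ i, g i * u i ≤ f u := by
  have hcont : Continuous f := by
    have h := hf.continuousOn isOpen_univ
    rwa [continuousOn_univ] at h
  set S : Set ((Fin k → ℝ) × ℝ) := {q | f q.1 < q.2} with hS
  have hSconv : Convex ℝ S := by
    intro q hq q' hq' a b ha hb hab
    simp only [hS, Set.mem_setOf_eq] at *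
    have h2 := hf.2 (Set.mem_univ q.1) (Set.mem_univ q'.1) ha hb hab
    calc f (a • q + b • q').1 = f (a • q.1 + b • q'.1) := rfl
      _ ≤ a * f q.1 + b * f q'.1 := h2
      _ < a * q.2 + b * q'.2 := by
          rcases eq_or_lt_of_le ha with h | h
          · rcases eq_or_lt_of_le hb with h' | h'
            · exfalso; rw [← h, ← h'] at hab; norm_num at hab
            · rw [← h]; simpa using mul_lt_mul_of_pos_left hq' h'
          · rcases eq_or_lt_of_le hb with h' | h'
            · rw [← h']; simpa using mul_lt_mul_of_pos_left hq h
            · exact add_lt_add (mul_lt_mul_of_pos_left hq h)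
                (mul_lt_mul_of_pos_left hq' h')
      _ = (a • q + b • q').2 := rfl
  have hSopen : IsOpen S := isOpen_lt (hcont.comp continuous_fst) continuous_snd
  have hnot : ((0 : Fin k → ℝ), f 0) ∉ S := by simp [hS]
  obtain ⟨φ, hφ⟩ := geometric_hahn_banach_open_point hSconv hSopen hnot
  set c : ℝ := φ (0, 1) with hc
  have hφ01 : ∀ t : ℝ, φ (0, t) = t * c := by
    intro t
    have : ((0 : Fin k → ℝ), t) = t • ((0 : Fin k → ℝ), (1:ℝ)) := by
      simp [Prod.smul_def]
    rw [this, map_smul]; simp [hc, smul_eq_mul]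
  have hφsplit : ∀ (u : Fin k → ℝ) (t : ℝ), φ (u, t) = φ (u, 0) + t * c := by
    intro u t
    have : ((u : Fin k → ℝ), t) = (u, 0) + (0, t) := by simp
    rw [this, map_add, hφ01]
  have hcneg : c < 0 := by
    have h := hφ (0, f 0 + 1) (by simp [hS])
    rw [hφ01, hφ01] at h
    nlinarith [h]
  have hkey : ∀ u : Fin k → ℝ, φ (u, 0) + f u * c ≤ f 0 * c := by
    intro u
    by_contra hcon
    push_neg at hcon
    set K : ℝ := f 0 * c - φ (u, 0) - f u * c with hK
    have hKneg : K < 0 := by rw [hK]; linarith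
    set ε : ℝ := K / (2 * c) with hε
    have hεpos : 0 < ε := by
      rw [hε]; exact div_pos_of_neg_of_neg hKneg (by linarith)
    have h := hφ (u, f u + ε) (by simp [hS, hεpos])
    rw [hφsplit, hφ01] at h
    have hc0 : c ≠ 0 := ne_of_lt hcneg
    have hεc : ε * c = K / 2 := by
      rw [hε]; field_simp
    nlinarith [h]
  refine ⟨fun i => φ ((fun j => if i = j then (1:ℝ) else 0), 0) / (-c), fun u => ?_⟩
  have hu : ((u : Fin k → ℝ), (0:ℝ))
      = ∑ i : Fin k, u i • ((fun j => if i = j then (1:ℝ) else 0), (0:ℝ)) := by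
    refine Prod.ext ?_ ?_
    · rw [Prod.fst_sum]; simpa using pi_eq_sum_univ u
    · rw [Prod.snd_sum]; simp
  have hφu : φ (u, 0) = ∑ i : Fin k, u i * φ ((fun j => if i = j then (1:ℝ) else 0), 0) := by
    rw [hu, map_sum]
    refine Finset.sum_congr rfl fun i _ => ?_
    rw [map_smul, smul_eq_mul]
  have hsum : ∑ i, (φ ((fun j => if i = j then (1:ℝ) else 0), 0) / (-c)) * u i
      = φ (u, 0) / (-c) := by
    rw [hφu, Finset.sum_div]
    congr 1; ext i; ring
  rw [hsum]
  have hc' : (0:ℝ) < -c := by linarith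
  have h2 : φ (u, 0) / (-c) ≤ f u - f 0 := by
    rw [div_le_iff₀ hc']
    nlinarith [hkey u]
  linarith

/-- A finite-everywhere convex function on `ℝ` has an affine minorant at `0`. -/
lemma exists_affine_minorant (ψ : ℝ → ℝ) (hψ : ConvexOn ℝ Set.univ ψ) :
    ∃ d : ℝ, ∀ u : ℝ, ψ 0 + d * u ≤ ψ u := by
  have hf : ConvexOn ℝ Set.univ (fun w : Fin 1 → ℝ => ψ (w 0)) := by
    refine ⟨convex_univ, fun w _ w' _ a b ha hb hab => ?_⟩
    exact hψ.2 (Set.mem_univ _) (Set.mem_univ _) ha hb hab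
  obtain ⟨g, hg⟩ := exists_subgradient_at_zero _ hf
  refine ⟨g 0, fun u => ?_⟩
  have h := hg (fun _ => u)
  simpa using h

lemma ereal_coe_sum {ι : Type*} (s : Finset ι) (g : ι → ℝ) :
    ((∑ i ∈ s, g i : ℝ) : EReal) = ∑ i ∈ s, ((g i : ℝ) : EReal) :=
  map_sum (⟨⟨Real.toEReal, EReal.coe_zero⟩, EReal.coe_add⟩ : ℝ →+ EReal) g s

/-- Sum of suprema is bounded when the joint sum is bounded. -/
lemma sum_sup_le {ι : Type*} [Fintype ι] [DecidableEq ι] (φ : ι → ℝ → ℝ) (C : ℝ)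
    (h : ∀ t : ι → ℝ, ∑ i, φ i (t i) ≤ C) :
    ∑ i, (⨆ u : ℝ, ((φ i u : ℝ) : EReal)) ≤ (C : EReal) := by
  have hbd : ∀ i u, φ i u ≤ C - ∑ i' ∈ Finset.univ.erase i, φ i' 0 := by
    intro i u
    have ht := h (Function.update (fun _ => (0:ℝ)) i u)
    rw [← Finset.add_sum_erase _ _ (Finset.mem_univ i)] at ht
    rw [Function.update_self] at ht
    have : ∑ i' ∈ Finset.univ.erase i, φ i' (Function.update (fun _ => (0:ℝ)) i u i')
        = ∑ i' ∈ Finset.univ.erase i, φ i' 0 := by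
      refine Finset.sum_congr rfl fun i' hi' => ?_
      rw [Function.update_of_ne (Finset.ne_of_mem_erase hi')]
    rw [this] at ht
    linarith
  have hne : ∀ i, (⨆ u : ℝ, ((φ i u : ℝ) : EReal)) ≠ ⊥ := by
    intro i
    exact ne_bot_of_le_ne_bot (by simp : ((φ i 0 : ℝ) : EReal) ≠ ⊥)
      (le_iSup (fun u => ((φ i u : ℝ) : EReal)) 0)
  have hnt : ∀ i, (⨆ u : ℝ, ((φ i u : ℝ) : EReal)) ≠ ⊤ := by
    intro i
    exact ne_top_of_le_ne_top
      (EReal.coe_ne_top (C - ∑ i' ∈ Finset.univ.erase i, φ i' 0))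
      (iSup_le fun u => EReal.coe_le_coe_iff.mpr (hbd i u))
  set R : ι → ℝ := fun i => (⨆ u : ℝ, ((φ i u : ℝ) : EReal)).toReal with hR
  have hRe : ∀ i, (⨆ u : ℝ, ((φ i u : ℝ) : EReal)) = ((R i : ℝ) : EReal) := by
    intro i; rw [hR]; exact (EReal.coe_toReal (hnt i) (hne i)).symm
  have hsum : ∑ i, (⨆ u : ℝ, ((φ i u : ℝ) : EReal)) = ((∑ i, R i : ℝ) : EReal) := by
    rw [ereal_coe_sum]
    exact Finset.sum_congr rfl fun i _ => hRe i
  rw [hsum, EReal.coe_le_coe_iff]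
  by_contra hcon
  push_neg at hcon
  rcases isEmpty_or_nonempty ι with hι | hι
  · have h0 := h (fun _ => 0)
    rw [Finset.univ_eq_empty] at h0 hcon
    simp at h0 hcon
    linarith
  · set ε := (∑ i, R i - C) / (Fintype.card ι + 1) with hε
    have hεpos : 0 < ε := by
      apply div_pos (by linarith) (by positivity)
    have hchoice : ∀ i, ∃ u : ℝ, R i - ε < φ i u := by
      intro i
      have hlt : ((R i - ε : ℝ) : EReal) < ⨆ u : ℝ, ((φ i u : ℝ) : EReal) := by
        rw [hRe i]; exact_mod_cast (by linarith : R i - ε < R i)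
      rw [lt_iSup_iff] at hlt
      obtain ⟨u, hu⟩ := hlt
      exact ⟨u, by exact_mod_cast hu⟩
    choose t ht using hchoice
    have hlt : ∑ i, (R i - ε) < ∑ i, φ i (t i) :=
      Finset.sum_lt_sum_of_nonempty Finset.univ_nonempty (fun i _ => ht i)
    rw [Finset.sum_sub_distrib, Finset.sum_const, Finset.card_univ] at hlt
    simp only [nsmul_eq_mul] at hlt
    have hmul : (Fintype.card ι : ℝ) * ε < ((Fintype.card ι : ℝ) + 1) * ε := by nlinarith
    have hεval : ((Fintype.card ι : ℝ) + 1) * ε = ∑ i, R i - C := by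
      rw [hε]; field_simp
    linarith [h t]

/-- Young-type quadratic bound. -/
lemma quad_bound {γ : ℝ} (hγ : 0 < γ) (w v : ℝ) :
    -(w * v) - γ / 2 * v ^ 2 ≤ 1 / (2 * γ) * w ^ 2 := by
  have h := sq_nonneg (w + γ * v)
  have hpos : (0:ℝ) < 1 / (2 * γ) := by positivity
  have key : 1 / (2 * γ) * (w + γ * v) ^ 2
      = 1 / (2 * γ) * w ^ 2 + w * v + γ / 2 * v ^ 2 := by
    field_simp; ring
  nlinarith [mul_nonneg hpos.le h]

/-- Exchanging the order of summation. -/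
lemma sum_swap_mul {n p : ℕ} (X : Matrix (Fin n) (Fin p) ℝ)
    (w : Fin p → ℝ) (β : Fin n → ℝ) :
    ∑ i, (∑ j, X i j * w j) * β i = ∑ j, w j * (∑ i, X i j * β i) := by
  simp_rw [Finset.sum_mul, Finset.mul_sum]
  rw [Finset.sum_comm]
  exact Finset.sum_congr rfl fun j _ => Finset.sum_congr rfl fun i _ => by ring

section Inner

variable {n p : ℕ} (X : Matrix (Fin n) (Fin p) ℝ) (y : Fin n → ℝ)
  (γ : ℝ) (ℓ : ℝ → ℝ → ℝ) (s : Fin p → ℝ)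

/-- The perturbed primal objective. -/
noncomputable def Fobj (u : Fin n → ℝ)
    (w : {w : Fin p → ℝ // ∀ j, s j = 0 → w j = 0}) : ℝ :=
  ∑ i, ℓ (y i) (∑ j, X i j * w.1 j + u i) + 1 / (2 * γ) * ∑ j, (w.1 j) ^ 2

/-- The value function of the perturbed problem. -/
noncomputable def vval (u : Fin n → ℝ) : ℝ :=
  sInf (Set.range (Fobj X y γ ℓ s u))

lemma Fobj_lower_bound (hγ : 0 < γ) (hconv : ∀ z : ℝ, ConvexOn ℝ Set.univ (ℓ z))
    (u : Fin n → ℝ) : ∃ m : ℝ, ∀ w, m ≤ Fobj X y γ ℓ s u w := by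
  choose d hd using fun i => exists_affine_minorant (ℓ (y i)) (hconv (y i))
  refine ⟨∑ i, (ℓ (y i) 0 + d i * u i) - γ / 2 * ∑ j, (∑ i, X i j * d i) ^ 2,
    fun w => ?_⟩
  have h1 : ∀ i, ℓ (y i) 0 + d i * (∑ j, X i j * w.1 j + u i)
      ≤ ℓ (y i) (∑ j, X i j * w.1 j + u i) := fun i => hd i _
  have h2 : ∑ i, (ℓ (y i) 0 + d i * (∑ j, X i j * w.1 j + u i))
      ≤ ∑ i, ℓ (y i) (∑ j, X i j * w.1 j + u i) :=
    Finset.sum_le_sum fun i _ => h1 i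
  have h3 : ∑ i, (ℓ (y i) 0 + d i * (∑ j, X i j * w.1 j + u i))
      = ∑ i, (ℓ (y i) 0 + d i * u i) + ∑ i, (∑ j, X i j * w.1 j) * d i := by
    rw [← Finset.sum_add_distrib]
    exact Finset.sum_congr rfl fun i _ => by ring
  have h4 : ∑ i, (∑ j, X i j * w.1 j) * d i
      = ∑ j, w.1 j * (∑ i, X i j * d i) := sum_swap_mul X w.1 d
  have h5 : ∀ j, -(w.1 j * (∑ i, X i j * d i)) - γ / 2 * (∑ i, X i j * d i) ^ 2
      ≤ 1 / (2 * γ) * (w.1 j) ^ 2 := fun j => quad_bound hγ _ _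
  have h6 : ∑ j, (-(w.1 j * (∑ i, X i j * d i)) - γ / 2 * (∑ i, X i j * d i) ^ 2)
      ≤ ∑ j, 1 / (2 * γ) * (w.1 j) ^ 2 := Finset.sum_le_sum fun j _ => h5 j
  have h7 : ∑ j, (-(w.1 j * (∑ i, X i j * d i)) - γ / 2 * (∑ i, X i j * d i) ^ 2)
      = -(∑ j, w.1 j * (∑ i, X i j * d i)) - γ / 2 * ∑ j, (∑ i, X i j * d i) ^ 2 := by
    rw [Finset.sum_sub_distrib, Finset.sum_neg_distrib, Finset.mul_sum]
  have h8 : ∑ j, 1 / (2 * γ) * (w.1 j) ^ 2 = 1 / (2 * γ) * ∑ j, (w.1 j) ^ 2 :=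
    (Finset.mul_sum _ _ _).symm
  unfold Fobj
  rw [h7, h8] at h6
  linarith [h2, h3 ▸ h2]

lemma vval_le (hγ : 0 < γ) (hconv : ∀ z : ℝ, ConvexOn ℝ Set.univ (ℓ z))
    (u : Fin n → ℝ) (w : {w : Fin p → ℝ // ∀ j, s j = 0 → w j = 0}) :
    vval X y γ ℓ s u ≤ Fobj X y γ ℓ s u w := by
  obtain ⟨m, hm⟩ := Fobj_lower_bound X y γ ℓ s hγ hconv u
  exact csInf_le ⟨m, fun x ⟨w', hw'⟩ => hw' ▸ hm w'⟩ ⟨w, rfl⟩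

lemma le_vval (hγ : 0 < γ) (hconv : ∀ z : ℝ, ConvexOn ℝ Set.univ (ℓ z))
    (u : Fin n → ℝ) (c : ℝ) (h : ∀ w, c ≤ Fobj X y γ ℓ s u w) :
    c ≤ vval X y γ ℓ s u := by
  refine le_csInf ⟨Fobj X y γ ℓ s u ⟨0, fun j _ => rfl⟩, ⟨_, rfl⟩⟩ ?_
  rintro b ⟨w, rfl⟩
  exact h w

end Inner

section Inner2

variable {n p : ℕ} (X : Matrix (Fin n) (Fin p) ℝ) (y : Fin n → ℝ)
  (γ : ℝ) (ℓ : ℝ → ℝ → ℝ) (s : Fin p → ℝ)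

lemma Fobj_convex_combo (hγ : 0 < γ) (hconv : ∀ z : ℝ, ConvexOn ℝ Set.univ (ℓ z))
    (u u' : Fin n → ℝ) (w w' : {w : Fin p → ℝ // ∀ j, s j = 0 → w j = 0})
    (a b : ℝ) (ha : 0 ≤ a) (hb : 0 ≤ b) (hab : a + b = 1) :
    Fobj X y γ ℓ s (a • u + b • u')
        ⟨fun j => a * w.1 j + b * w'.1 j,
          fun j hj => by
            show a * w.1 j + b * w'.1 j = 0
            rw [w.2 j hj, w'.2 j hj]; ring⟩
      ≤ a * Fobj X y γ ℓ s u w + b * Fobj X y γ ℓ s u' w' := by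
  have hz : ∀ i, ∑ j, X i j * (a * w.1 j + b * w'.1 j) + (a • u + b • u') i
      = a * (∑ j, X i j * w.1 j + u i) + b * (∑ j, X i j * w'.1 j + u' i) := by
    intro i
    have : ∑ j, X i j * (a * w.1 j + b * w'.1 j)
        = a * (∑ j, X i j * w.1 j) + b * (∑ j, X i j * w'.1 j) := by
      rw [Finset.mul_sum, Finset.mul_sum, ← Finset.sum_add_distrib]
      exact Finset.sum_congr rfl fun j _ => by ring
    simp only [Pi.add_apply, Pi.smul_apply, smul_eq_mul]
    rw [this]; ring
  have hterm : ∀ i, ℓ (y i) (∑ j, X i j * (a * w.1 j + b * w'.1 j) + (a • u + b • u') i)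
      ≤ a * ℓ (y i) (∑ j, X i j * w.1 j + u i) + b * ℓ (y i) (∑ j, X i j * w'.1 j + u' i) := by
    intro i
    rw [hz i]
    exact (hconv (y i)).2 (Set.mem_univ _) (Set.mem_univ _) ha hb hab
  have hsum1 : ∑ i, ℓ (y i) (∑ j, X i j * (a * w.1 j + b * w'.1 j) + (a • u + b • u') i)
      ≤ a * ∑ i, ℓ (y i) (∑ j, X i j * w.1 j + u i)
        + b * ∑ i, ℓ (y i) (∑ j, X i j * w'.1 j + u' i) := by
    calc _ ≤ ∑ i, (a * ℓ (y i) (∑ j, X i j * w.1 j + u i)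
            + b * ℓ (y i) (∑ j, X i j * w'.1 j + u' i)) :=
          Finset.sum_le_sum fun i _ => hterm i
      _ = _ := by rw [Finset.sum_add_distrib, ← Finset.mul_sum, ← Finset.mul_sum]
  have hquad : ∑ j, (a * w.1 j + b * w'.1 j) ^ 2
      ≤ a * ∑ j, (w.1 j) ^ 2 + b * ∑ j, (w'.1 j) ^ 2 := by
    calc ∑ j, (a * w.1 j + b * w'.1 j) ^ 2
        ≤ ∑ j, (a * (w.1 j) ^ 2 + b * (w'.1 j) ^ 2) := by
          refine Finset.sum_le_sum fun j _ => ?_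
          nlinarith [sq_nonneg (w.1 j - w'.1 j), mul_nonneg ha hb]
      _ = _ := by rw [Finset.sum_add_distrib, ← Finset.mul_sum, ← Finset.mul_sum]
  have hpos : (0:ℝ) < 1 / (2 * γ) := by positivity
  unfold Fobj
  simp only
  nlinarith [mul_le_mul_of_nonneg_left hquad hpos.le]

lemma vval_convex (hγ : 0 < γ) (hconv : ∀ z : ℝ, ConvexOn ℝ Set.univ (ℓ z)) :
    ConvexOn ℝ Set.univ (vval X y γ ℓ s) := by
  refine ⟨convex_univ, fun u _ u' _ a b ha hb hab => ?_⟩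
  rcases eq_or_lt_of_le ha with ha0 | hapos
  · have hb1 : b = 1 := by linarith
    subst hb1
    rw [← ha0]
    simp
  rcases eq_or_lt_of_le hb with hb0 | hbpos
  · have ha1 : a = 1 := by linarith
    subst ha1
    rw [← hb0]
    simp
  -- both positive
  have step1 : ∀ w' : {w : Fin p → ℝ // ∀ j, s j = 0 → w j = 0},
      vval X y γ ℓ s (a • u + b • u') ≤ a * vval X y γ ℓ s u + b * Fobj X y γ ℓ s u' w' := by
    intro w'
    have h1 : ∀ w, (vval X y γ ℓ s (a • u + b • u') - b * Fobj X y γ ℓ s u' w') / a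
        ≤ Fobj X y γ ℓ s u w := by
      intro w
      rw [div_le_iff₀ hapos]
      have := le_trans (vval_le X y γ ℓ s hγ hconv (a • u + b • u') _)
        (Fobj_convex_combo X y γ ℓ s hγ hconv u u' w w' a b ha hb hab)
      linarith [this]
    have h2 := le_vval X y γ ℓ s hγ hconv u _ h1
    rw [div_le_iff₀ hapos] at h2
    linarith
  have h3 : ∀ w', (vval X y γ ℓ s (a • u + b • u') - a * vval X y γ ℓ s u) / b
      ≤ Fobj X y γ ℓ s u' w' := by
    intro w'
    rw [div_le_iff₀ hbpos]
    linarith [step1 w']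
  have h4 := le_vval X y γ ℓ s hγ hconv u' _ h3
  rw [div_le_iff₀ hbpos] at h4
  simp only [smul_eq_mul]
  linarith

end Inner2


/-- Strong duality for the inner ℓ₂-regularized problem restricted to the support
encoded by a binary vector `s`. -/
theorem inner_problem_strong_duality
    {n p : ℕ}
    (X : Matrix (Fin n) (Fin p) ℝ) (y : Fin n → ℝ)
    (γ : ℝ) (hγ : 0 < γ)
    (ℓ : ℝ → ℝ → ℝ) (hconv : ∀ z : ℝ, ConvexOn ℝ Set.univ (ℓ z))
    (lhat : ℝ → ℝ → EReal)
    (hlhat : ∀ z a : ℝ, lhat z a = ⨆ u : ℝ, ((u * a - ℓ z u : ℝ) : EReal))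
    (f : (Fin n → ℝ) → (Fin p → ℝ) → EReal)
    (hf : ∀ α s, f α s =
      -(∑ i, lhat (y i) (α i))
        - ((γ / 2 * ∑ j, s j * (∑ i, X i j * α i) ^ 2 : ℝ) : EReal))
    (s : Fin p → ℝ) (hs : ∀ j, s j = 0 ∨ s j = 1) :
    (⨅ w : {w : Fin p → ℝ // ∀ j, s j = 0 → w j = 0},
        ((∑ i, ℓ (y i) (∑ j, X i j * w.1 j)
            + 1 / (2 * γ) * ∑ j, (w.1 j) ^ 2 : ℝ) : EReal))
      = ⨆ α : Fin n → ℝ, f α s := by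
  classical
  -- Weak duality
  have weak : ∀ (α : Fin n → ℝ) (w : {w : Fin p → ℝ // ∀ j, s j = 0 → w j = 0}),
      f α s ≤ ((∑ i, ℓ (y i) (∑ j, X i j * w.1 j)
        + 1 / (2 * γ) * ∑ j, (w.1 j) ^ 2 : ℝ) : EReal) := by
    intro α w
    have h1 : ∀ i, (((∑ j, X i j * w.1 j) * α i
        - ℓ (y i) (∑ j, X i j * w.1 j) : ℝ) : EReal) ≤ lhat (y i) (α i) := by
      intro i
      rw [hlhat]
      exact le_iSup (fun u => ((u * α i - ℓ (y i) u : ℝ) : EReal)) (∑ j, X i j * w.1 j)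
    have h2 : ((∑ i, ((∑ j, X i j * w.1 j) * α i
        - ℓ (y i) (∑ j, X i j * w.1 j)) : ℝ) : EReal) ≤ ∑ i, lhat (y i) (α i) := by
      rw [ereal_coe_sum]
      exact Finset.sum_le_sum fun i _ => h1 i
    have h3 : -(∑ i, lhat (y i) (α i))
        ≤ ((-(∑ i, ((∑ j, X i j * w.1 j) * α i
            - ℓ (y i) (∑ j, X i j * w.1 j))) : ℝ) : EReal) := by
      rw [EReal.coe_neg]
      exact EReal.neg_le_neg_iff.mpr h2
    have hreal : -(∑ i, ((∑ j, X i j * w.1 j) * α i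
          - ℓ (y i) (∑ j, X i j * w.1 j)))
          - γ / 2 * ∑ j, s j * (∑ i, X i j * α i) ^ 2
        ≤ ∑ i, ℓ (y i) (∑ j, X i j * w.1 j) + 1 / (2 * γ) * ∑ j, (w.1 j) ^ 2 := by
      have e3 : ∑ i, ((∑ j, X i j * w.1 j) * α i - ℓ (y i) (∑ j, X i j * w.1 j))
          = ∑ i, (∑ j, X i j * w.1 j) * α i
            - ∑ i, ℓ (y i) (∑ j, X i j * w.1 j) := Finset.sum_sub_distrib _ _
      have hswap := sum_swap_mul X w.1 α
      have hperj : ∀ j, -(w.1 j * (∑ i, X i j * α i))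
          - γ / 2 * (s j * (∑ i, X i j * α i) ^ 2) ≤ 1 / (2 * γ) * (w.1 j) ^ 2 := by
        intro j
        rcases hs j with h0 | h1
        · rw [w.2 j h0, h0]
          simp
        · rw [h1, one_mul]
          exact quad_bound hγ _ _
      have hsum := Finset.sum_le_sum fun j (_ : j ∈ Finset.univ) => hperj j
      rw [Finset.sum_sub_distrib, Finset.sum_neg_distrib, ← Finset.mul_sum,
        ← Finset.mul_sum] at hsum
      rw [e3]
      linarith [hsum, hswap]
    calc f α s = -(∑ i, lhat (y i) (α i))
          - ((γ / 2 * ∑ j, s j * (∑ i, X i j * α i) ^ 2 : ℝ) : EReal) := hf α s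
      _ ≤ ((-(∑ i, ((∑ j, X i j * w.1 j) * α i
            - ℓ (y i) (∑ j, X i j * w.1 j))) : ℝ) : EReal)
          - ((γ / 2 * ∑ j, s j * (∑ i, X i j * α i) ^ 2 : ℝ) : EReal) := by
          rw [sub_eq_add_neg, sub_eq_add_neg]
          exact add_le_add_left h3 _
      _ = ((-(∑ i, ((∑ j, X i j * w.1 j) * α i
            - ℓ (y i) (∑ j, X i j * w.1 j)))
            - γ / 2 * ∑ j, s j * (∑ i, X i j * α i) ^ 2 : ℝ) : EReal) := by
          rw [EReal.coe_sub]
      _ ≤ _ := EReal.coe_le_coe_iff.mpr hreal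
  -- Strong duality: subgradient of the value function
  obtain ⟨α, hα⟩ := exists_subgradient_at_zero (vval X y γ ℓ s)
    (vval_convex X y γ ℓ s hγ hconv)
  have hkey : ∀ t : Fin n → ℝ, ∑ i, (t i * α i - ℓ (y i) (t i))
      ≤ -(vval X y γ ℓ s 0) - γ / 2 * ∑ j, s j * (∑ i, X i j * α i) ^ 2 := by
    intro t
    set wstar : {w : Fin p → ℝ // ∀ j, s j = 0 → w j = 0} :=
      ⟨fun j => -(γ * (s j * (∑ i, X i j * α i))), fun j hj => by
        show -(γ * (s j * (∑ i, X i j * α i))) = 0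
        rw [hj]; ring⟩ with hwstar
    have h1 := hα (fun i => t i - ∑ j, X i j * wstar.1 j)
    have h2 := vval_le X y γ ℓ s hγ hconv (fun i => t i - ∑ j, X i j * wstar.1 j) wstar
    have h3 : Fobj X y γ ℓ s (fun i => t i - ∑ j, X i j * wstar.1 j) wstar
        = ∑ i, ℓ (y i) (t i) + 1 / (2 * γ) * ∑ j, (wstar.1 j) ^ 2 := by
      unfold Fobj
      congr 1
      refine Finset.sum_congr rfl fun i _ => ?_
      congr 1
      ring
    have h4 : ∑ i, (∑ j, X i j * wstar.1 j) * α i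
        = ∑ j, wstar.1 j * (∑ i, X i j * α i) := sum_swap_mul X wstar.1 α
    have h5 : ∑ j, wstar.1 j * (∑ i, X i j * α i)
        = -(γ * ∑ j, s j * (∑ i, X i j * α i) ^ 2) := by
      calc ∑ j, wstar.1 j * (∑ i, X i j * α i)
          = ∑ j, -(γ * (s j * (∑ i, X i j * α i) ^ 2)) := by
            refine Finset.sum_congr rfl fun j _ => ?_
            show -(γ * (s j * (∑ i, X i j * α i))) * (∑ i, X i j * α i) = _
            ring
        _ = -(γ * ∑ j, s j * (∑ i, X i j * α i) ^ 2) := by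
            rw [Finset.sum_neg_distrib, ← Finset.mul_sum]
    have h6 : ∑ j, (wstar.1 j) ^ 2 = γ ^ 2 * ∑ j, s j * (∑ i, X i j * α i) ^ 2 := by
      rw [Finset.mul_sum]
      refine Finset.sum_congr rfl fun j _ => ?_
      show (-(γ * (s j * (∑ i, X i j * α i)))) ^ 2 = γ ^ 2 * (s j * (∑ i, X i j * α i) ^ 2)
      rcases hs j with h0 | h1
      · rw [h0]; ring
      · rw [h1]; ring
    have h7 : ∑ i, α i * (t i - ∑ j, X i j * wstar.1 j)
        = ∑ i, t i * α i - ∑ i, (∑ j, X i j * wstar.1 j) * α i := by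
      rw [← Finset.sum_sub_distrib]
      exact Finset.sum_congr rfl fun i _ => by ring
    have hγ2 : 1 / (2 * γ) * (γ ^ 2 * ∑ j, s j * (∑ i, X i j * α i) ^ 2)
        = γ / 2 * ∑ j, s j * (∑ i, X i j * α i) ^ 2 := by
      rw [← mul_assoc]
      congr 1
      field_simp
    rw [h3, h6] at h2
    rw [h7, h4, h5] at h1
    have e8 : ∑ i, (t i * α i - ℓ (y i) (t i))
        = ∑ i, t i * α i - ∑ i, ℓ (y i) (t i) := Finset.sum_sub_distrib _ _
    rw [e8]
    linarith [h1, h2, hγ2]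
  have hsup : ∑ i, lhat (y i) (α i)
      ≤ ((-(vval X y γ ℓ s 0)
        - γ / 2 * ∑ j, s j * (∑ i, X i j * α i) ^ 2 : ℝ) : EReal) := by
    have hss := sum_sup_le (fun i u => u * α i - ℓ (y i) u) _ hkey
    calc ∑ i, lhat (y i) (α i)
        = ∑ i, ⨆ u : ℝ, ((u * α i - ℓ (y i) u : ℝ) : EReal) :=
          Finset.sum_congr rfl fun i _ => hlhat _ _
      _ ≤ _ := hss
  have hstrong : ((vval X y γ ℓ s 0 : ℝ) : EReal) ≤ f α s := by
    rw [hf]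
    have hneg : ((-((-(vval X y γ ℓ s 0)
        - γ / 2 * ∑ j, s j * (∑ i, X i j * α i) ^ 2)) : ℝ) : EReal)
        ≤ -(∑ i, lhat (y i) (α i)) := by
      rw [EReal.coe_neg]
      exact EReal.neg_le_neg_iff.mpr hsup
    calc ((vval X y γ ℓ s 0 : ℝ) : EReal)
        = ((-((-(vval X y γ ℓ s 0) - γ / 2 * ∑ j, s j * (∑ i, X i j * α i) ^ 2))
            - γ / 2 * ∑ j, s j * (∑ i, X i j * α i) ^ 2 : ℝ) : EReal) := by
          norm_cast
          ring
      _ = ((-((-(vval X y γ ℓ s 0)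
            - γ / 2 * ∑ j, s j * (∑ i, X i j * α i) ^ 2)) : ℝ) : EReal)
          - ((γ / 2 * ∑ j, s j * (∑ i, X i j * α i) ^ 2 : ℝ) : EReal) := by
          rw [EReal.coe_sub]
      _ ≤ -(∑ i, lhat (y i) (α i))
          - ((γ / 2 * ∑ j, s j * (∑ i, X i j * α i) ^ 2 : ℝ) : EReal) := by
          rw [sub_eq_add_neg, sub_eq_add_neg]
          exact add_le_add_left hneg _
  have hinf : (⨅ w : {w : Fin p → ℝ // ∀ j, s j = 0 → w j = 0},
      ((∑ i, ℓ (y i) (∑ j, X i j * w.1 j)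
          + 1 / (2 * γ) * ∑ j, (w.1 j) ^ 2 : ℝ) : EReal))
      ≤ ((vval X y γ ℓ s 0 : ℝ) : EReal) := by
    by_contra hcon
    push_neg at hcon
    obtain ⟨r, hr1, hr2⟩ := EReal.exists_between_coe_real hcon
    have hrle : ∀ w : {w : Fin p → ℝ // ∀ j, s j = 0 → w j = 0},
        r ≤ ∑ i, ℓ (y i) (∑ j, X i j * w.1 j) + 1 / (2 * γ) * ∑ j, (w.1 j) ^ 2 := by
      intro w
      have h := le_trans hr2.le (iInf_le _ w)
      exact_mod_cast h
    have hrv : r ≤ vval X y γ ℓ s 0 := by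
      refine le_vval X y γ ℓ s hγ hconv 0 r fun w => ?_
      have hfe : Fobj X y γ ℓ s 0 w
          = ∑ i, ℓ (y i) (∑ j, X i j * w.1 j) + 1 / (2 * γ) * ∑ j, (w.1 j) ^ 2 := by
        unfold Fobj
        simp
      rw [hfe]
      exact hrle w
    have : vval X y γ ℓ s 0 < r := by exact_mod_cast hr1
    linarith
  refine le_antisymm ?_ (iSup_le fun β => le_iInf fun w => weak β w)
  calc (⨅ w : {w : Fin p → ℝ // ∀ j, s j = 0 → w j = 0},
      ((∑ i, ℓ (y i) (∑ j, X i j * w.1 j)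
          + 1 / (2 * γ) * ∑ j, (w.1 j) ^ 2 : ℝ) : EReal))
      ≤ ((vval X y γ ℓ s 0 : ℝ) : EReal) := hinf
    _ ≤ f α s := hstrong
    _ ≤ ⨆ β : Fin n → ℝ, f β s := le_iSup (fun β => f β s) α
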